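/- Existence of a fixed point of the coupled Lyapunov operator iff the spectral radius condition holds (Proposition 3): there exists an N-tuple S = (S_1, …, S_N) of positive semidefinite symmetric n_x×n_x matrices satisfying S_n = 𝒮_{e,n}(S) for all n = 1,…,N if and only if ρ(𝒜_e) < 1. Moreover, when ρ(𝒜_e) < 1 this fixed point is unique. -/

import Mathlib

open Matrix Kronecker

/-- The coupled Lyapunov operator
`𝒮_{e,n}(V) = ∑ m, p_{e,mn} (1 − λ γ̂_{e,m}) A V_m Aᵀ + π^∞_{e,n} Q`. -/
noncomputable def Sop {nx N : ℕ} (A Q : Matrix (Fin nx) (Fin nx) ℝ)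
    (Pe : Matrix (Fin N) (Fin N) ℝ) (γ : Fin N → ℝ) (lam : ℝ) (π : Fin N → ℝ)
    (V : Fin N → Matrix (Fin nx) (Fin nx) ℝ) (n : Fin N) :
    Matrix (Fin nx) (Fin nx) ℝ :=
  (∑ m, (Pe m n * (1 - lam * γ m)) • (A * V m * Aᵀ)) + π n • Q

/-- Block diagonal matrix (direct sum) of `N` matrices on the index set `I`. -/
def blkDiag {N : ℕ} {I : Type} [DecidableEq (Fin N)]
    (f : Fin N → Matrix I I ℝ) : Matrix (Fin N × I) (Fin N × I) ℝ :=
  Matrix.of fun p q => if p.1 = q.1 then f p.1 p.2 q.2 else 0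

/-- The matrix `𝒜_e = (P_eᵀ ⊗ I_{n_x²}) · blkdiag_m ((1 − λ γ̂_{e,m}) (A ⊗ A))`. -/
noncomputable def calAe {nx N : ℕ} (A : Matrix (Fin nx) (Fin nx) ℝ)
    (Pe : Matrix (Fin N) (Fin N) ℝ) (γ : Fin N → ℝ) (lam : ℝ) :
    Matrix (Fin N × (Fin nx × Fin nx)) (Fin N × (Fin nx × Fin nx)) ℝ :=
  (Peᵀ ⊗ₖ (1 : Matrix (Fin nx × Fin nx) (Fin nx × Fin nx) ℝ)) *
    blkDiag (fun m => (1 - lam * γ m) • (A ⊗ₖ A))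

/-- Spectral radius of a real square matrix: the largest absolute value of its
(complex) eigenvalues. -/
noncomputable def specRad {ι : Type} [Fintype ι] [DecidableEq ι]
    (M : Matrix ι ι ℝ) : ℝ :=
  sSup {r : ℝ | ∃ μ ∈ spectrum ℂ (M.map (Complex.ofReal ·)), r = ‖μ‖}

namespace P3
variable {nx N : ℕ}

lemma calAe_apply (A : Matrix (Fin nx) (Fin nx) ℝ) (Pe : Matrix (Fin N) (Fin N) ℝ)
    (γ : Fin N → ℝ) (lam : ℝ) (n m : Fin N) (p q : Fin nx × Fin nx) :
    calAe A Pe γ lam (n, p) (m, q)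
      = (Pe m n * (1 - lam * γ m)) * (A p.1 q.1 * A p.2 q.2) := by
  obtain ⟨p1, p2⟩ := p
  simp only [calAe, Matrix.mul_apply, blkDiag, Matrix.kroneckerMap_apply, Matrix.of_apply,
    Fintype.sum_prod_type, Matrix.transpose_apply, Matrix.one_apply, Matrix.smul_apply,
    smul_eq_mul, Prod.mk.injEq, ite_and, mul_ite, ite_mul, mul_zero, zero_mul, mul_one]
  rw [Finset.sum_comm]
  simp [Finset.sum_ite_eq, Finset.sum_ite_eq']
  ring

lemma mulVec_vec {R : Type} [CommRing R] (c : Fin N → Fin N → R)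
    (B : Matrix (Fin nx) (Fin nx) R)
    (M : Matrix (Fin N × (Fin nx × Fin nx)) (Fin N × (Fin nx × Fin nx)) R)
    (hM : ∀ n m p q, M (n, p) (m, q) = c m n * (B p.1 q.1 * B p.2 q.2))
    (V : Fin N → Matrix (Fin nx) (Fin nx) R) (x : Fin N × (Fin nx × Fin nx)) :
    (M *ᵥ fun y => V y.1 y.2.1 y.2.2) x
      = (∑ m, c m x.1 • (B * V m * Bᵀ)) x.2.1 x.2.2 := by
  obtain ⟨n, p⟩ := x
  have hM' : ∀ (m : Fin N) (k l : Fin nx),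
      M (n, p) (m, (k, l)) = c m n * (B p.1 k * B p.2 l) := fun m k l => hM n m p (k, l)
  simp only [Matrix.mulVec, dotProduct, Fintype.sum_prod_type, hM',
    Finset.sum_apply, Matrix.sum_apply, Matrix.smul_apply, Matrix.mul_apply, Matrix.transpose_apply, smul_eq_mul,
    Finset.mul_sum, Finset.sum_mul]
  congr 1; funext m
  rw [Finset.sum_comm]
  congr 1; funext k
  congr 1; funext l
  ring
end P3

open scoped ComplexOrder

namespace P3b
variable {nx N : ℕ}

/-- the abstract coupled Lyapunov operator, as a linear endomorphism -/
noncomputable def Lop (K : Type) [Field K] (c : Fin N → Fin N → K)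
    (B : Matrix (Fin nx) (Fin nx) K) :
    Module.End K (Fin N → Matrix (Fin nx) (Fin nx) K) where
  toFun V n := ∑ m, c m n • (B * V m * Bᵀ)
  map_add' U W := by
    funext n
    simp [Matrix.mul_add, Matrix.add_mul, smul_add, Finset.sum_add_distrib]
  map_smul' r V := by
    funext n
    simp only [Pi.smul_apply, Matrix.mul_smul, Matrix.smul_mul, Finset.smul_sum,
      RingHom.id_apply, smul_comm r]

lemma Lop_apply {K : Type} [Field K] (c : Fin N → Fin N → K)
    (B : Matrix (Fin nx) (Fin nx) K) (V : Fin N → Matrix (Fin nx) (Fin nx) K) (n : Fin N) :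
    Lop K c B V n = ∑ m, c m n • (B * V m * Bᵀ) := rfl

/-- vectorization -/
def vecE (K : Type) [Field K] :
    (Fin N → Matrix (Fin nx) (Fin nx) K) ≃ₗ[K] ((Fin N × (Fin nx × Fin nx)) → K) where
  toFun V x := V x.1 x.2.1 x.2.2
  invFun f n := Matrix.of fun i j => f (n, (i, j))
  map_add' U W := rfl
  map_smul' r V := rfl
  left_inv V := rfl
  right_inv f := rfl

lemma mulVec_vecE {K : Type} [Field K] (c : Fin N → Fin N → K)
    (B : Matrix (Fin nx) (Fin nx) K)
    (M : Matrix (Fin N × (Fin nx × Fin nx)) (Fin N × (Fin nx × Fin nx)) K)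
    (hM : ∀ n m p q, M (n, p) (m, q) = c m n * (B p.1 q.1 * B p.2 q.2))
    (V : Fin N → Matrix (Fin nx) (Fin nx) K) :
    M *ᵥ (vecE K V) = vecE K (Lop K c B V) := by
  funext x
  exact P3.mulVec_vec c B M hM V x

lemma pow_mulVec_vecE {K : Type} [Field K] (c : Fin N → Fin N → K)
    (B : Matrix (Fin nx) (Fin nx) K)
    (M : Matrix (Fin N × (Fin nx × Fin nx)) (Fin N × (Fin nx × Fin nx)) K)
    (hM : ∀ n m p q, M (n, p) (m, q) = c m n * (B p.1 q.1 * B p.2 q.2))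
    (V : Fin N → Matrix (Fin nx) (Fin nx) K) (k : ℕ) :
    (M ^ k) *ᵥ (vecE K V) = vecE K ((Lop K c B ^ k) V) := by
  induction k generalizing V with
  | zero => simp
  | succ k ih =>
      rw [pow_succ, pow_succ, ← Matrix.mulVec_mulVec, mulVec_vecE c B M hM, ih,
        Module.End.mul_apply]

end P3b

namespace P3c
open P3b
variable {nx N : ℕ} {K : Type} [RCLike K]

lemma psd_smul {ι : Type} [Fintype ι] {M : Matrix ι ι K} (hM : M.PosSemidef) {r : K}
    (hr : 0 ≤ r) : (r • M).PosSemidef := by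
  have hsr : star r = r := IsSelfAdjoint.of_nonneg hr
  refine Matrix.PosSemidef.of_dotProduct_mulVec_nonneg ?_ ?_
  · unfold Matrix.IsHermitian
    rw [Matrix.conjTranspose_smul, hsr, hM.1]
  · intro x
    calc (0 : K) ≤ r * (dotProduct (star x) (M *ᵥ x)) := mul_nonneg hr (hM.dotProduct_mulVec_nonneg x)
    _ = dotProduct (star x) ((r • M) *ᵥ x) := by
        rw [Matrix.smul_mulVec, dotProduct_smul, smul_eq_mul]

lemma psd_sum {ι κ : Type} [Fintype ι] (s : Finset κ) (f : κ → Matrix ι ι K)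
    (h : ∀ i ∈ s, (f i).PosSemidef) : (∑ i ∈ s, f i).PosSemidef := by
  classical
  induction s using Finset.induction_on with
  | empty => simpa using Matrix.PosSemidef.zero
  | insert _ _ hnot ih =>
      rw [Finset.sum_insert hnot]
      exact Matrix.PosSemidef.add (h _ (Finset.mem_insert_self _ _))
        (ih fun i hi => h i (Finset.mem_insert_of_mem hi))

lemma Lop_psd (c : Fin N → Fin N → K) (B : Matrix (Fin nx) (Fin nx) K)
    (hc : ∀ m n, 0 ≤ c m n) (hB : Bᵀ = Bᴴ)
    (V : Fin N → Matrix (Fin nx) (Fin nx) K) (hV : ∀ n, (V n).PosSemidef) (n : Fin N) :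
    ((Lop K c B) V n).PosSemidef := by
  rw [Lop_apply]
  refine psd_sum _ _ (fun m _ => ?_)
  exact psd_smul (hB ▸ (hV m).mul_mul_conjTranspose_same B) (hc m n)

end P3c

namespace P3d
open P3b Complex
variable {ι : Type} [Fintype ι] [DecidableEq ι]

/-- standard basis vector -/
def e (p : ι) : ι → ℂ := Pi.single p 1

lemma star_single (p : ι) : star (e p) = e p := by
  funext i
  simp [e, Pi.single_apply, Pi.star_apply, apply_ite (star : ℂ → ℂ)]

lemma quad_single (M : Matrix ι ι ℂ) (i : ι) :
    dotProduct (star (e i)) (M *ᵥ e i) = M i i := by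
  rw [star_single]
  simp [e, Matrix.mulVec_single, single_dotProduct]

lemma psd_diag_nonneg {M : Matrix ι ι ℂ} (hM : M.PosSemidef) (i : ι) : 0 ≤ M i i := by
  have := hM.dotProduct_mulVec_nonneg (e i)
  rwa [quad_single] at this

lemma psd_diag_re_nonneg {M : Matrix ι ι ℂ} (hM : M.PosSemidef) (i : ι) : 0 ≤ (M i i).re := by
  have := psd_diag_nonneg hM i
  rw [Complex.le_def] at this
  simpa using this.1

lemma quad_expand (M : Matrix ι ι ℂ) (a : ℂ) (p q : ι) :
    dotProduct (star (a • e p + e q)) (M *ᵥ (a • e p + e q))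
    = star a * a * M p p + star a * M p q + a * M q p + M q q := by
  rw [star_add, star_smul, star_single, star_single]
  simp only [e, Matrix.mulVec_add, Matrix.mulVec_smul, Matrix.mulVec_single,
    add_dotProduct, smul_dotProduct, dotProduct_add,
    dotProduct_smul, single_dotProduct, smul_eq_mul, mul_one, Pi.add_apply,
    Pi.smul_apply]
  simp only [MulOpposite.op_one, one_smul, Matrix.col_apply]
  ring

lemma psd_abs_entry {M : Matrix ι ι ℂ} (hM : M.PosSemidef) (p q : ι) :
    ‖M p q‖ ≤ (M p p).re + (M q q).re := by
  by_cases hpq : M p q = 0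
  · rw [hpq]
    simpa using add_nonneg (psd_diag_re_nonneg hM p) (psd_diag_re_nonneg hM q)
  · set r : ℝ := ‖M p q‖ with hr
    have hr0 : 0 < r := norm_pos_iff.mpr hpq
    have hrC : (r : ℂ) ≠ 0 := by exact_mod_cast hr0.ne'
    set a : ℂ := -(M p q) / r with ha
    have hstar_a : star a = -((starRingEnd ℂ) (M p q)) / r := by
      simp [ha, star_div₀, Complex.conj_ofReal]
    have hMqp : M q p = (starRingEnd ℂ) (M p q) := by
      have h2 : Mᴴ q p = M q p := by rw [hM.1]
      rw [Matrix.conjTranspose_apply] at h2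
      rw [← h2, starRingEnd_apply]
    have hnsq : (starRingEnd ℂ) (M p q) * M p q = (r : ℂ) ^ 2 := by
      rw [mul_comm, Complex.mul_conj, Complex.normSq_eq_norm_sq, ← hr]
      push_cast
      ring
    have h1 : star a * a * M p p = M p p := by
      rw [hstar_a, ha]
      rw [div_mul_div_comm, neg_mul_neg, hnsq]
      rw [pow_two, div_self (mul_ne_zero hrC hrC), one_mul]
    have h2 : star a * M p q = -r := by
      rw [hstar_a, div_mul_eq_mul_div, neg_mul, hnsq]
      rw [pow_two, neg_div, mul_div_assoc, div_self hrC, mul_one]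
    have h3 : a * M q p = -r := by
      rw [ha, hMqp, div_mul_eq_mul_div, neg_mul, mul_comm, hnsq]
      rw [pow_two, neg_div, mul_div_assoc, div_self hrC, mul_one]
    have hq := hM.dotProduct_mulVec_nonneg (a • e p + e q)
    rw [quad_expand, h1, h2, h3, Complex.le_def] at hq
    have := hq.1
    simp only [Complex.zero_re, Complex.add_re, Complex.neg_re, Complex.ofReal_re] at this
    linarith [psd_diag_re_nonneg hM p, psd_diag_re_nonneg hM q]

lemma sub_psd_diag_le {H E : Matrix ι ι ℂ} (h : (E - H).PosSemidef) (i : ι) :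
    (H i i).re ≤ (E i i).re := by
  have := psd_diag_re_nonneg h i
  simp only [Matrix.sub_apply, Complex.sub_re] at this
  linarith

end P3d

namespace P3e
open Complex
variable {ι : Type} [Fintype ι] [DecidableEq ι]

/-- squared ℓ² norm of a complex vector -/
noncomputable def n2 (x : ι → ℂ) : ℝ := ∑ i, Complex.normSq (x i)

lemma n2_nonneg (x : ι → ℂ) : 0 ≤ n2 x :=
  Finset.sum_nonneg fun i _ => Complex.normSq_nonneg _

lemma herm_quad_im {M : Matrix ι ι ℂ} (hM : M.IsHermitian) (x : ι → ℂ) :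
    (dotProduct (star x) (M *ᵥ x)).im = 0 := by
  have h : star (dotProduct (star x) (M *ᵥ x)) = dotProduct (star x) (M *ᵥ x) := by
    have h0 : star (M *ᵥ x) ⬝ᵥ x = star (star x ⬝ᵥ (M *ᵥ x)) := Matrix.star_dotProduct _ _
    rw [← h0, Matrix.star_mulVec, ← Matrix.dotProduct_mulVec, hM.eq]
  have := congrArg Complex.im h
  simp only [Complex.star_def, Complex.conj_im] at this
  linarith

lemma re_quad_map (M : Matrix ι ι ℝ) (x : ι → ℂ) :
    (dotProduct (star x) ((M.map (Complex.ofReal ·)) *ᵥ x)).re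
      = dotProduct (fun i => (x i).re) (M *ᵥ fun i => (x i).re)
      + dotProduct (fun i => (x i).im) (M *ᵥ fun i => (x i).im) := by
  simp only [dotProduct, Matrix.mulVec, Pi.star_apply, Complex.star_def,
    Matrix.map_apply, Complex.re_sum, Finset.mul_sum, Finset.sum_add_distrib, ← Finset.sum_add_distrib]
  refine Finset.sum_congr rfl fun i _ => ?_
  refine Finset.sum_congr rfl fun j _ => ?_
  simp only [Complex.mul_re, Complex.mul_im, Complex.conj_re, Complex.conj_im,
    Complex.ofReal_re, Complex.ofReal_im]
  ring

lemma psd_map {M : Matrix ι ι ℝ} (hM : M.PosSemidef) :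
    (M.map (Complex.ofReal ·)).PosSemidef := by
  have hherm : (M.map (Complex.ofReal ·)).IsHermitian := by
    unfold Matrix.IsHermitian
    ext i j
    have := congrFun (congrFun hM.1 i) j
    simp only [Matrix.conjTranspose_apply, Matrix.map_apply, Complex.star_def,
      Complex.conj_ofReal] at *
    exact_mod_cast this
  refine Matrix.PosSemidef.of_dotProduct_mulVec_nonneg hherm fun x => ?_
  rw [Complex.le_def]
  constructor
  · rw [Complex.zero_re, re_quad_map]
    have h1 := hM.dotProduct_mulVec_nonneg (fun i => (x i).re)
    have h2 := hM.dotProduct_mulVec_nonneg (fun i => (x i).im)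
    simp only [star_trivial] at h1 h2
    exact add_nonneg h1 h2
  · rw [Complex.zero_im, herm_quad_im hherm]

lemma quad_smul_one (t : ℝ) (x : ι → ℂ) :
    dotProduct (star x) (((t : ℂ) • (1 : Matrix ι ι ℂ)) *ᵥ x) = (t * n2 x : ℝ) := by
  rw [Matrix.smul_mulVec, Matrix.one_mulVec, dotProduct_smul]
  have : dotProduct (star x) x = (n2 x : ℝ) := by
    simp only [dotProduct, Pi.star_apply, Complex.star_def, n2]
    push_cast
    refine Finset.sum_congr rfl fun i _ => ?_
    rw [mul_comm, Complex.mul_conj]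
  rw [this, smul_eq_mul]
  push_cast
  ring

lemma abs_quad_le (H : Matrix ι ι ℂ) (x : ι → ℂ) :
    ‖dotProduct (star x) (H *ᵥ x)‖
      ≤ (∑ i, ∑ j, ‖H i j‖) * n2 x := by
  have habs2 : ∀ i, ‖x i‖ ^ 2 ≤ n2 x := fun i => by
    rw [Complex.sq_norm]
    exact Finset.single_le_sum (f := fun k => Complex.normSq (x k))
      (fun k _ => Complex.normSq_nonneg _) (Finset.mem_univ i)
  have hxx : ∀ i j, ‖x i‖ * ‖x j‖ ≤ n2 x := fun i j => by
    nlinarith [habs2 i, habs2 j, norm_nonneg (x i), norm_nonneg (x j),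
      sq_nonneg (‖x i‖ - ‖x j‖)]
  calc ‖dotProduct (star x) (H *ᵥ x)‖
      ≤ ∑ i, ‖star x i * (H *ᵥ x) i‖ := by
        rw [dotProduct]
        exact norm_sum_le _ _
    _ ≤ ∑ i, ∑ j, ‖H i j‖ * (‖x i‖ * ‖x j‖) := by
        refine Finset.sum_le_sum fun i _ => ?_
        rw [norm_mul]
        calc ‖star x i‖ * ‖(H *ᵥ x) i‖
            ≤ ‖x i‖ * ∑ j, ‖H i j * x j‖ := by
              rw [Pi.star_apply, Complex.star_def, Complex.norm_conj]
              refine mul_le_mul_of_nonneg_left ?_ (norm_nonneg _)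
              rw [Matrix.mulVec, dotProduct]
              exact norm_sum_le _ _
          _ = ∑ j, ‖H i j‖ * (‖x i‖ * ‖x j‖) := by
              rw [Finset.mul_sum]
              refine Finset.sum_congr rfl fun j _ => ?_
              rw [norm_mul]
              ring
    _ ≤ ∑ i, ∑ j, ‖H i j‖ * n2 x := by
        refine Finset.sum_le_sum fun i _ => Finset.sum_le_sum fun j _ => ?_
        exact mul_le_mul_of_nonneg_left (hxx i j) (norm_nonneg _)
    _ = (∑ i, ∑ j, ‖H i j‖) * n2 x := by
        rw [Finset.sum_mul]
        exact Finset.sum_congr rfl fun i _ => (Finset.sum_mul _ _ _).symm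

/-- a Hermitian matrix plus a large multiple of the identity is PSD -/
lemma herm_add_smul_one_psd {H : Matrix ι ι ℂ} (hH : H.IsHermitian) :
    ((((∑ i, ∑ j, ‖H i j‖) : ℝ) : ℂ) • (1 : Matrix ι ι ℂ) + H).PosSemidef := by
  set t : ℝ := ∑ i, ∑ j, ‖H i j‖ with ht
  have hherm : ((t : ℂ) • (1 : Matrix ι ι ℂ) + H).IsHermitian := by
    unfold Matrix.IsHermitian
    rw [Matrix.conjTranspose_add, Matrix.conjTranspose_smul, hH.eq, Matrix.conjTranspose_one]
    simp [Complex.conj_ofReal]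
  refine Matrix.PosSemidef.of_dotProduct_mulVec_nonneg hherm fun x => ?_
  rw [Matrix.add_mulVec, dotProduct_add, Complex.le_def]
  constructor
  · rw [Complex.zero_re, Complex.add_re, quad_smul_one]
    have h1 := abs_quad_le H x
    have h2 := Complex.abs_re_le_norm (dotProduct (star x) (H *ᵥ x))
    simp only [Complex.ofReal_re]
    have := neg_abs_le (dotProduct (star x) (H *ᵥ x)).re
    linarith
  · rw [Complex.zero_im, Complex.add_im, herm_quad_im hH, quad_smul_one]
    simp
end P3e

namespace P3f
open Complex P3e
variable {ι : Type} [Fintype ι] [DecidableEq ι] [Nonempty ι]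

lemma Q_lower {Q : Matrix ι ι ℝ} (hQ : Q.PosDef) :
    ∃ ε > 0, ∀ y : ι → ℝ, ε * (∑ i, y i ^ 2) ≤ dotProduct y (Q *ᵥ y) := by
  classical
  set f : (ι → ℝ) → ℝ := fun y => dotProduct y (Q *ᵥ y) with hf
  have hcont : Continuous f := by
    refine continuous_finset_sum _ fun i _ => ?_
    refine Continuous.mul (continuous_apply i) ?_
    exact continuous_finset_sum _ fun j _ => (continuous_apply j).const_smul (Q i j)
  have hScompact : IsCompact (Metric.sphere (0 : ι → ℝ) 1) := isCompact_sphere 0 1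
  have hSne : (Metric.sphere (0 : ι → ℝ) 1).Nonempty := by
    obtain ⟨x, hx⟩ := exists_norm_eq (ι → ℝ) (zero_le_one (α := ℝ))
    exact ⟨x, by simpa [mem_sphere_zero_iff_norm] using hx⟩
  obtain ⟨x0, hx0mem, hx0min⟩ := hScompact.exists_isMinOn hSne hcont.continuousOn
  have hx0norm : ‖x0‖ = 1 := by simpa [mem_sphere_zero_iff_norm] using hx0mem
  have hx0ne : x0 ≠ 0 := by
    intro h; rw [h] at hx0norm; simp at hx0norm
  have hε : 0 < f x0 := by simpa [hf] using hQ.dotProduct_mulVec_pos hx0ne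
  set d : ℝ := (Fintype.card ι : ℝ) with hd
  have hd0 : 0 < d := by
    rw [hd]; exact_mod_cast Fintype.card_pos
  refine ⟨f x0 / d, by positivity, fun y => ?_⟩
  by_cases hy : y = 0
  · simp [hy, Matrix.mulVec_zero]
  · have hyn : 0 < ‖y‖ := norm_pos_iff.mpr hy
    set z : ι → ℝ := ‖y‖⁻¹ • y with hz
    have hz_mem : z ∈ Metric.sphere (0 : ι → ℝ) 1 := by
      rw [mem_sphere_zero_iff_norm, hz, norm_smul]
      simp [abs_of_pos (inv_pos.mpr hyn), inv_mul_cancel₀ hyn.ne']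
    have hmin := hx0min hz_mem
    have hfz : f z = ‖y‖⁻¹ ^ 2 * f y := by
      simp only [hf, hz, dotProduct, Matrix.mulVec, Pi.smul_apply, smul_eq_mul,
        Finset.mul_sum]
      refine Finset.sum_congr rfl fun i _ => ?_
      refine Finset.sum_congr rfl fun j _ => ?_
      ring
    have hsum_le : (∑ i, y i ^ 2) ≤ d * ‖y‖ ^ 2 := by
      calc (∑ i, y i ^ 2) ≤ ∑ _i : ι, ‖y‖ ^ 2 := by
            refine Finset.sum_le_sum fun i _ => ?_
            have h1 : |y i| ≤ ‖y‖ := by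
              have := norm_le_pi_norm y i
              simpa [Real.norm_eq_abs] using this
            nlinarith [abs_nonneg (y i), norm_nonneg y, _root_.sq_abs (y i)]
        _ = d * ‖y‖ ^ 2 := by simp [hd, Finset.sum_const, nsmul_eq_mul]
    have hfy : f x0 * ‖y‖ ^ 2 ≤ f y := by
      have h2 : f x0 ≤ ‖y‖⁻¹ ^ 2 * f y := le_of_eq_of_le rfl (hfz ▸ hmin)
      have h3 := mul_le_mul_of_nonneg_left h2 (sq_nonneg ‖y‖)
      have h4 : ‖y‖ ^ 2 * (‖y‖⁻¹ ^ 2 * f y) = f y := by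
        field_simp
      rw [h4] at h3
      linarith [h3]
    calc f x0 / d * (∑ i, y i ^ 2) ≤ f x0 / d * (d * ‖y‖ ^ 2) := by
          exact mul_le_mul_of_nonneg_left hsum_le (by positivity)
      _ = f x0 * ‖y‖ ^ 2 := by field_simp
      _ ≤ f y := hfy

/-- domination of a PSD complex matrix by a positive-definite real matrix -/
lemma psd_dominate {Q : Matrix ι ι ℝ} (hQ : Q.PosDef) {H : Matrix ι ι ℂ} (hH : H.PosSemidef) :
    ∃ t : ℝ, 0 ≤ t ∧ (((t : ℂ) • Q.map (Complex.ofReal ·) - H)).PosSemidef := by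
  obtain ⟨ε, hε, hQlow⟩ := Q_lower hQ
  set tH : ℝ := ∑ i, ∑ j, ‖H i j‖ with htH
  have htH0 : 0 ≤ tH :=
    Finset.sum_nonneg fun i _ => Finset.sum_nonneg fun j _ => norm_nonneg _
  refine ⟨tH / ε, by positivity, ?_⟩
  have hQc : (Q.map (Complex.ofReal ·)).PosSemidef := P3e.psd_map hQ.posSemidef
  have hherm : (((tH / ε : ℝ) : ℂ) • Q.map (Complex.ofReal ·) - H).IsHermitian := by
    unfold Matrix.IsHermitian
    rw [Matrix.conjTranspose_sub, Matrix.conjTranspose_smul, hH.1.eq, hQc.1.eq]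
    simp [Complex.conj_ofReal]
  refine Matrix.PosSemidef.of_dotProduct_mulVec_nonneg hherm fun x => ?_
  rw [Complex.le_def]
  refine ⟨?_, by rw [Complex.zero_im, herm_quad_im hherm]⟩
  rw [Complex.zero_re, Matrix.sub_mulVec, dotProduct_sub, Complex.sub_re]
  have hsmul : dotProduct (star x) ((((tH / ε : ℝ) : ℂ) • Q.map (Complex.ofReal ·)) *ᵥ x)
      = ((tH / ε : ℝ) : ℂ) * dotProduct (star x) ((Q.map (Complex.ofReal ·)) *ᵥ x) := by
    rw [Matrix.smul_mulVec, dotProduct_smul, smul_eq_mul]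
  rw [hsmul]
  have hre1 : (((tH / ε : ℝ) : ℂ) * dotProduct (star x) ((Q.map (Complex.ofReal ·)) *ᵥ x)).re
      = (tH / ε) * (dotProduct (star x) ((Q.map (Complex.ofReal ·)) *ᵥ x)).re := by
    rw [Complex.re_ofReal_mul]
  rw [hre1, re_quad_map]
  -- lower bound for the Q part
  set a : ι → ℝ := fun i => (x i).re
  set b : ι → ℝ := fun i => (x i).im
  have hQa := hQlow a
  have hQb := hQlow b
  have hn2 : n2 x = (∑ i, a i ^ 2) + (∑ i, b i ^ 2) := by
    rw [n2, ← Finset.sum_add_distrib]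
    exact Finset.sum_congr rfl fun i _ => by
      simp [Complex.normSq_apply, a, b]; ring
  -- upper bound for the H part
  have hHbound : (dotProduct (star x) (H *ᵥ x)).re ≤ tH * n2 x := by
    have h1 := Complex.abs_re_le_norm (dotProduct (star x) (H *ᵥ x))
    have h2 := abs_quad_le H x
    calc (dotProduct (star x) (H *ᵥ x)).re
        ≤ |(dotProduct (star x) (H *ᵥ x)).re| := le_abs_self _
      _ ≤ ‖dotProduct (star x) (H *ᵥ x)‖ := h1
      _ ≤ tH * n2 x := h2
  have hQtotal : ε * n2 x ≤ dotProduct a (Q *ᵥ a) + dotProduct b (Q *ᵥ b) := by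
    rw [hn2, mul_add]
    exact add_le_add hQa hQb
  have hn2nn : 0 ≤ n2 x := n2_nonneg x
  have key := mul_le_mul_of_nonneg_left hQtotal (show (0:ℝ) ≤ tH / ε by positivity)
  have heq : tH / ε * (ε * n2 x) = tH * n2 x := by field_simp
  linarith

end P3f

namespace P3g
open Filter Topology
open scoped ENNReal NNReal
attribute [local instance] Matrix.linftyOpNormedRing Matrix.linftyOpNormedAlgebra
variable {D : Type} [Fintype D] [DecidableEq D] [Nonempty D]

lemma mem_spectrum_iff_eigen (M : Matrix D D ℂ) (μ : ℂ) :
    μ ∈ spectrum ℂ M ↔ ∃ v : D → ℂ, v ≠ 0 ∧ M *ᵥ v = μ • v := by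
  rw [spectrum.mem_iff, Algebra.algebraMap_eq_smul_one, Matrix.isUnit_iff_isUnit_det,
    isUnit_iff_ne_zero, not_ne_iff, ← Matrix.exists_mulVec_eq_zero_iff]
  constructor
  · rintro ⟨v, hv, hveq⟩
    refine ⟨v, hv, ?_⟩
    rw [Matrix.sub_mulVec, Matrix.smul_mulVec, Matrix.one_mulVec, sub_eq_zero] at hveq
    exact hveq.symm
  · rintro ⟨v, hv, hveq⟩
    refine ⟨v, hv, ?_⟩
    rw [Matrix.sub_mulVec, Matrix.smul_mulVec, Matrix.one_mulVec, sub_eq_zero, hveq]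

lemma entry_norm_le (X : Matrix D D ℂ) (i j : D) : ‖X i j‖ ≤ ‖X‖ := by
  rw [Matrix.linfty_opNorm_def]
  have h1 : ‖X i j‖₊ ≤ ∑ j', ‖X i j'‖₊ :=
    Finset.single_le_sum (f := fun j' => ‖X i j'‖₊) (fun _ _ => zero_le) (Finset.mem_univ j)
  have h2 : (∑ j', ‖X i j'‖₊) ≤ Finset.univ.sup fun i => ∑ j', ‖X i j'‖₊ :=
    Finset.le_sup (f := fun i => ∑ j', ‖X i j'‖₊) (Finset.mem_univ i)
  exact_mod_cast h1.trans h2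

lemma bddAbove_specSet (M : Matrix D D ℝ) :
    BddAbove {r : ℝ | ∃ μ ∈ spectrum ℂ (M.map (Complex.ofReal ·)), r = ‖μ‖} := by
  refine ⟨‖M.map (Complex.ofReal ·)‖, ?_⟩
  rintro r ⟨μ, hμ, rfl⟩
  have := spectrum.norm_le_norm_of_mem hμ
  exact this

lemma specRad_lt_one_of_eigen (M : Matrix D D ℝ)
    (h : ∀ μ ∈ spectrum ℂ (M.map (Complex.ofReal ·)), ‖μ‖ < 1) :
    specRad M < 1 := by
  obtain ⟨z, hz, hzrad⟩ :=
    spectrum.exists_nnnorm_eq_spectralRadius (a := M.map (Complex.ofReal ·))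
  have hne : {r : ℝ | ∃ μ ∈ spectrum ℂ (M.map (Complex.ofReal ·)), r = ‖μ‖}.Nonempty :=
    ⟨‖z‖, z, hz, rfl⟩
  have hle : specRad M ≤ ‖z‖ := by
    refine csSup_le hne ?_
    rintro r ⟨μ, hμ, rfl⟩
    have h1 : (‖μ‖₊ : ℝ≥0∞) ≤ spectralRadius ℂ (M.map (Complex.ofReal ·)) :=
      le_iSup₂ (α := ℝ≥0∞) μ hμ
    rw [← hzrad] at h1
    have h2 : ‖μ‖ ≤ ‖z‖ := by exact_mod_cast h1
    exact h2
  exact lt_of_le_of_lt hle (h z hz)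

lemma spectralRadius_lt_one (M : Matrix D D ℝ) (h : specRad M < 1) :
    spectralRadius ℂ (M.map (Complex.ofReal ·)) < 1 := by
  show (⨆ k ∈ spectrum ℂ (M.map (Complex.ofReal ·)), (‖k‖₊ : ℝ≥0∞)) < 1
  refine lt_of_le_of_lt (iSup₂_le fun μ hμ => ?_) (ENNReal.ofReal_lt_one.mpr h)
  rw [← enorm_eq_nnnorm, ← ofReal_norm]
  refine ENNReal.ofReal_le_ofReal ?_
  exact le_csSup (bddAbove_specSet M) ⟨μ, hμ, rfl⟩

lemma norm_pow_tendsto (M : Matrix D D ℝ) (h : specRad M < 1) :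
    Tendsto (fun k => ‖(M.map (Complex.ofReal ·)) ^ k‖) atTop (𝓝 0) := by
  set Mc := M.map (Complex.ofReal ·) with hMc
  have hsr := spectralRadius_lt_one M h
  obtain ⟨c, hc1, hc2⟩ := exists_between hsr
  have hgel := spectrum.pow_nnnorm_pow_one_div_tendsto_nhds_spectralRadius Mc
  have hev : ∀ᶠ k : ℕ in atTop, (‖Mc ^ k‖₊ : ℝ≥0∞) ^ (1 / (k : ℝ)) < c :=
    hgel.eventually_lt_const hc1
  have hcne : c ≠ ⊤ := (hc2.trans_le le_top).ne
  set cr : ℝ := c.toReal with hcr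
  have hcr1 : cr < 1 := by
    rw [hcr, ← ENNReal.toReal_one]
    exact ENNReal.toReal_strict_mono (by simp) hc2
  have hcr0 : 0 ≤ cr := ENNReal.toReal_nonneg
  have hbound : ∀ᶠ k : ℕ in atTop, ‖Mc ^ k‖ ≤ cr ^ k := by
    filter_upwards [hev, eventually_ge_atTop 1] with k hk hk1
    have hkne : (k : ℝ) ≠ 0 := by positivity
    have h1 : ((‖Mc ^ k‖₊ : ℝ≥0∞) ^ (1 / (k : ℝ))) ^ (k : ℝ) ≤ c ^ (k : ℝ) :=
      ENNReal.rpow_le_rpow hk.le (by positivity)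
    rw [← ENNReal.rpow_mul, one_div, inv_mul_cancel₀ hkne, ENNReal.rpow_one] at h1
    have h2 : (‖Mc ^ k‖₊ : ℝ≥0∞) ≤ c ^ (k : ℕ) := by
      rwa [ENNReal.rpow_natCast] at h1
    have h3 := ENNReal.toReal_mono (by simp [hcne, ENNReal.pow_ne_top]) h2
    simpa [ENNReal.toReal_pow, hcr] using h3
  have hpow : Tendsto (fun k : ℕ => cr ^ k) atTop (𝓝 0) :=
    tendsto_pow_atTop_nhds_zero_of_lt_one hcr0 hcr1
  refine squeeze_zero' (Eventually.of_forall fun k => norm_nonneg _) hbound hpow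

lemma pow_entry_tendsto (M : Matrix D D ℝ) (h : specRad M < 1) (i j : D) :
    Tendsto (fun k => (M ^ k) i j) atTop (𝓝 0) := by
  have h1 := norm_pow_tendsto M h
  have hmap : ∀ k : ℕ, (M ^ k).map (Complex.ofReal ·) = (M.map (Complex.ofReal ·)) ^ k := by
    intro k
    have := map_pow (Complex.ofRealHom.mapMatrix) M k
    simp [RingHom.mapMatrix_apply] at this; exact this
  have hb : ∀ k : ℕ, |(M ^ k) i j| ≤ ‖(M.map (Complex.ofReal ·)) ^ k‖ := by
    intro k
    have h2 := entry_norm_le ((M.map (Complex.ofReal ·)) ^ k) i j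
    have h3 : ((M.map (Complex.ofReal ·)) ^ k) i j = (((M ^ k) i j : ℝ) : ℂ) := by
      rw [← hmap k]; simp [Matrix.map_apply]
    rw [h3, Complex.norm_real, Real.norm_eq_abs] at h2
    exact h2
  have : Tendsto (fun k => |(M ^ k) i j|) atTop (𝓝 0) :=
    squeeze_zero' (Eventually.of_forall fun k => abs_nonneg _)
      (Eventually.of_forall hb) h1
  exact (tendsto_zero_iff_abs_tendsto_zero _).mpr this

lemma one_sub_det_ne_zero (M : Matrix D D ℝ) (h : specRad M < 1) :
    IsUnit (1 - M) := by
  rw [Matrix.isUnit_iff_isUnit_det, isUnit_iff_ne_zero]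
  intro hdet
  have hdetC : ((1 : Matrix D D ℂ) - M.map (Complex.ofReal ·)).det = 0 := by
    have h1 : Complex.ofRealHom ((1 - M).det) = ((1 - M).map Complex.ofRealHom).det :=
      (RingHom.map_det Complex.ofRealHom (1 - M)).symm ▸ rfl
    have h2 : ((1 - M).map Complex.ofRealHom) = 1 - M.map (Complex.ofReal ·) := by
      have := map_sub (Complex.ofRealHom.mapMatrix) 1 M
      simp [RingHom.mapMatrix_apply] at this; exact this
    rw [hdet] at h1
    rw [← h2]
    exact_mod_cast h1.symm
  obtain ⟨v, hv, hveq⟩ := (Matrix.exists_mulVec_eq_zero_iff).mpr hdetC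
  have hone : (1 : ℂ) ∈ spectrum ℂ (M.map (Complex.ofReal ·)) := by
    rw [mem_spectrum_iff_eigen]
    refine ⟨v, hv, ?_⟩
    rw [Matrix.sub_mulVec, Matrix.one_mulVec, sub_eq_zero] at hveq
    rw [one_smul, ← hveq]
  have : (1 : ℝ) ≤ specRad M := by
    have := le_csSup (bddAbove_specSet M) (show (1:ℝ) ∈ _ from ⟨1, hone, by simp⟩)
    exact this
  linarith

lemma eigen_abs_lt_one {M : Matrix D D ℂ} {μ : ℂ} {v : D → ℂ} (hv : v ≠ 0)
    (heig : M *ᵥ v = μ • v)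
    (hdecay : ∀ d, Tendsto (fun k => ((M ^ k) *ᵥ v) d) atTop (𝓝 0)) :
    ‖μ‖ < 1 := by
  have hpow : ∀ k : ℕ, (M ^ k) *ᵥ v = μ ^ k • v := by
    intro k
    induction k with
    | zero => simp
    | succ k ih =>
        rw [pow_succ, ← Matrix.mulVec_mulVec, heig, Matrix.mulVec_smul, ih, smul_smul, ← pow_succ']
  obtain ⟨d, hd⟩ := Function.ne_iff.mp hv
  have hd' : 0 < ‖v d‖ := norm_pos_iff.mpr hd
  by_contra hcon
  push_neg at hcon
  have hdec := hdecay d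
  simp only [hpow, Pi.smul_apply, smul_eq_mul] at hdec
  have hnorm : Tendsto (fun k => ‖μ ^ k * v d‖) atTop (𝓝 0) := by
    rw [← norm_zero (E := ℂ)]
    exact hdec.norm
  obtain ⟨k, hk⟩ := (hnorm.eventually_lt_const hd').exists
  have h1k : (1:ℝ) ≤ ‖μ‖ ^ k := one_le_pow₀ hcon
  have : ‖v d‖ ≤ ‖μ ^ k * v d‖ := by
    rw [norm_mul, norm_pow]
    nlinarith
  linarith

end P3g

/-- generic unfolding of a fixed point of an affine map -/
lemma unfold_fixed {R : Type} [CommRing R] {X : Type} [AddCommGroup X] [Module R X]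
    (L : Module.End R X) (S b : X) (hfix : S = L S + b) (k : ℕ) :
    S = (L ^ k) S + ∑ j ∈ Finset.range k, (L ^ j) b := by
  induction k with
  | zero => simp
  | succ k ih =>
      have h1 : (L ^ k) S = (L ^ (k + 1)) S + (L ^ k) b := by
        nth_rewrite 1 [hfix]
        rw [map_add, pow_succ, Module.End.mul_apply]
      rw [Finset.sum_range_succ]
      nth_rewrite 1 [ih]
      rw [h1]
      abel

namespace P3main
open P3b P3c P3d P3e P3f P3g Filter Topology Complex
open scoped ComplexOrder

variable {nx N : ℕ}
  (A Q : Matrix (Fin nx) (Fin nx) ℝ)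
  (Pe : Matrix (Fin N) (Fin N) ℝ) (γ : Fin N → ℝ) (lam : ℝ) (π : Fin N → ℝ)

/-- real coefficients -/
def c (m n : Fin N) : ℝ := Pe m n * (1 - lam * γ m)

/-- complex coefficients -/
noncomputable def cC (m n : Fin N) : ℂ := ((c Pe γ lam m n : ℝ) : ℂ)

/-- complexified A -/
noncomputable def Ac : Matrix (Fin nx) (Fin nx) ℂ := A.map (Complex.ofReal ·)

lemma Ac_transpose : (Ac A)ᵀ = (Ac A)ᴴ := by
  ext i j
  simp [Ac, Matrix.conjTranspose_apply, Matrix.transpose_apply, Matrix.map_apply,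
    Complex.conj_ofReal]

lemma A_transpose : Aᵀ = Aᴴ := by
  ext i j
  simp [Matrix.conjTranspose_apply, Matrix.transpose_apply]

lemma c_nonneg (hPnonneg : ∀ m n, 0 ≤ Pe m n) (hγ : ∀ m, γ m ∈ Set.Icc (0:ℝ) 1)
    (hlam : lam ∈ Set.Icc (0:ℝ) 1) (m n : Fin N) : 0 ≤ c Pe γ lam m n := by
  have h1 : lam * γ m ≤ 1 := by
    obtain ⟨h2, h3⟩ := hγ m
    obtain ⟨h4, h5⟩ := hlam
    nlinarith
  have := hPnonneg m n
  unfold c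
  nlinarith

lemma cC_nonneg (hPnonneg : ∀ m n, 0 ≤ Pe m n) (hγ : ∀ m, γ m ∈ Set.Icc (0:ℝ) 1)
    (hlam : lam ∈ Set.Icc (0:ℝ) 1) (m n : Fin N) : 0 ≤ cC Pe γ lam m n := by
  rw [cC, Complex.le_def]
  simp [c_nonneg Pe γ lam hPnonneg hγ hlam m n]

/-- the entries of `calAe` -/
lemma M_entries (n m : Fin N) (p q : Fin nx × Fin nx) :
    calAe A Pe γ lam (n, p) (m, q) = c Pe γ lam m n * (A p.1 q.1 * A p.2 q.2) :=
  P3.calAe_apply A Pe γ lam n m p q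

lemma Mc_entries (n m : Fin N) (p q : Fin nx × Fin nx) :
    (calAe A Pe γ lam).map (Complex.ofReal ·) (n, p) (m, q)
      = cC Pe γ lam m n * (Ac A p.1 q.1 * Ac A p.2 q.2) := by
  simp only [Matrix.map_apply, M_entries, cC, Ac]
  push_cast
  ring

/-- mapping tuples to ℂ -/
noncomputable def mapT (V : Fin N → Matrix (Fin nx) (Fin nx) ℝ) :
    Fin N → Matrix (Fin nx) (Fin nx) ℂ := fun n => (V n).map (Complex.ofReal ·)

lemma map_LR (V : Fin N → Matrix (Fin nx) (Fin nx) ℝ) :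
    mapT (Lop ℝ (c Pe γ lam) A V) = Lop ℂ (cC Pe γ lam) (Ac A) (mapT V) := by
  funext n
  ext i j
  simp only [mapT, Lop_apply, Matrix.map_apply, Matrix.sum_apply, Matrix.smul_apply,
    Matrix.mul_apply, Matrix.transpose_apply, smul_eq_mul, cC, Ac]
  push_cast
  ring_nf

lemma map_LR_pow (V : Fin N → Matrix (Fin nx) (Fin nx) ℝ) (k : ℕ) :
    mapT ((Lop ℝ (c Pe γ lam) A ^ k) V) = (Lop ℂ (cC Pe γ lam) (Ac A) ^ k) (mapT V) := by
  induction k generalizing V with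
  | zero => simp
  | succ k ih =>
      rw [pow_succ, pow_succ, Module.End.mul_apply, Module.End.mul_apply, ← map_LR, ih]

end P3main

namespace P3main
open P3b P3c P3d P3e P3f P3g Filter Topology Complex
open scoped ComplexOrder

variable {nx N : ℕ}
  (A Q : Matrix (Fin nx) (Fin nx) ℝ)
  (Pe : Matrix (Fin N) (Fin N) ℝ) (γ : Fin N → ℝ) (lam : ℝ) (π : Fin N → ℝ)

lemma decay_core (hnx : 0 < nx) (hQ : Q.PosDef)
    (hPnonneg : ∀ m n, 0 ≤ Pe m n) (hγ : ∀ m, γ m ∈ Set.Icc (0:ℝ) 1)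
    (hlam : lam ∈ Set.Icc (0:ℝ) 1) (hπ : ∀ n, 0 < π n)
    (S : Fin N → Matrix (Fin nx) (Fin nx) ℝ) (hSpsd : ∀ n, (S n).PosSemidef)
    (hSfix : S = Lop ℝ (c Pe γ lam) A S + (fun n => π n • Q)) :
    ∀ (V : Fin N → Matrix (Fin nx) (Fin nx) ℂ) (n : Fin N) (i j : Fin nx),
      Tendsto (fun k => ((Lop ℂ (cC Pe γ lam) (Ac A) ^ k) V n) i j) atTop (𝓝 0) := by
  haveI : Nonempty (Fin nx) := Fin.pos_iff_nonempty.mp hnx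
  set LC := Lop ℂ (cC Pe γ lam) (Ac A) with hLC
  have hc0C := cC_nonneg Pe γ lam hPnonneg hγ hlam
  have hLCpsd : ∀ (W : Fin N → Matrix (Fin nx) (Fin nx) ℂ), (∀ n, (W n).PosSemidef) →
      ∀ n, (LC W n).PosSemidef := fun W hW n =>
    Lop_psd (cC Pe γ lam) (Ac A) hc0C (Ac_transpose A) W hW n
  have hLCpow : ∀ (k : ℕ) (W : Fin N → Matrix (Fin nx) (Fin nx) ℂ),
      (∀ n, (W n).PosSemidef) → ∀ n, ((LC ^ k) W n).PosSemidef := by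
    intro k
    induction k with
    | zero => intro W hW n; simpa using hW n
    | succ k ih =>
        intro W hW n
        rw [pow_succ, Module.End.mul_apply]
        exact ih (LC W) (hLCpsd W hW) n
  set Qc : Matrix (Fin nx) (Fin nx) ℂ := Q.map (Complex.ofReal ·) with hQc
  set bcT : Fin N → Matrix (Fin nx) (Fin nx) ℂ := mapT (fun n => π n • Q) with hbcT
  have hbc_eq : ∀ n, bcT n = ((π n : ℝ) : ℂ) • Qc := by
    intro n
    ext i j
    simp [hbcT, mapT, Matrix.map_apply, Matrix.smul_apply, hQc]
  have hbpsd : ∀ n, (bcT n).PosSemidef := by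
    intro n
    exact P3e.psd_map (psd_smul hQ.posSemidef (hπ n).le)
  set Sc : Fin N → Matrix (Fin nx) (Fin nx) ℂ := mapT S with hSc
  have hScpsd : ∀ n, (Sc n).PosSemidef := fun n => P3e.psd_map (hSpsd n)
  have hScfix : Sc = LC Sc + bcT := by
    rw [hSc]
    nth_rewrite 1 [hSfix]
    have hadd : mapT (Lop ℝ (c Pe γ lam) A S + fun n => π n • Q)
        = mapT (Lop ℝ (c Pe γ lam) A S) + mapT (fun n => π n • Q) := by
      funext n
      simp [mapT, Matrix.map_add]
    rw [hadd, map_LR]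
  have hunfold := unfold_fixed LC Sc bcT hScfix
  -- diagonal decay of iterates of bcT
  have hdiag : ∀ (n : Fin N) (i : Fin nx),
      Tendsto (fun k => (((LC ^ k) bcT n) i i).re) atTop (𝓝 0) := by
    intro n i
    have hterm : ∀ k, 0 ≤ (((LC ^ k) bcT n) i i).re := fun k =>
      psd_diag_re_nonneg (hLCpow k bcT hbpsd n) i
    have hpartial : ∀ k, ∑ j ∈ Finset.range k, (((LC ^ j) bcT n) i i).re ≤ (Sc n i i).re := by
      intro k
      have h1 := hunfold k
      have h2 : Sc n i i = ((LC ^ k) Sc n) i i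
          + ∑ j ∈ Finset.range k, (((LC ^ j) bcT n) i i) := by
        nth_rewrite 1 [h1]
        simp [Finset.sum_apply, Matrix.sum_apply, Matrix.add_apply]
      have h3 : (Sc n i i).re = (((LC ^ k) Sc n) i i).re
          + ∑ j ∈ Finset.range k, (((LC ^ j) bcT n) i i).re := by
        rw [h2]
        simp [Complex.add_re, Complex.re_sum]
      have h4 := psd_diag_re_nonneg (hLCpow k Sc hScpsd n) i
      linarith
    have hsum : Summable (fun k => (((LC ^ k) bcT n) i i).re) :=
      summable_of_sum_range_le hterm hpartial
    exact hsum.tendsto_atTop_zero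
  -- decay for PSD tuples
  have hpsd_decay : ∀ (W : Fin N → Matrix (Fin nx) (Fin nx) ℂ), (∀ n, (W n).PosSemidef) →
      ∀ (n : Fin N) (p q : Fin nx),
      Tendsto (fun k => ((LC ^ k) W n) p q) atTop (𝓝 0) := by
    intro W hW
    have hdom : ∀ n, ∃ t : ℝ, 0 ≤ t ∧ ((t : ℂ) • Qc - W n).PosSemidef := fun n =>
      psd_dominate hQ (hW n)
    choose t ht0 htps using hdom
    set s : ℝ := ∑ n, t n / π n with hs
    have hsn : ∀ n, t n / π n ≤ s := by
      intro n
      refine Finset.single_le_sum (f := fun n => t n / π n) (fun m _ => ?_) (Finset.mem_univ n)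
      exact div_nonneg (ht0 m) (hπ m).le
    have hs0 : 0 ≤ s := Finset.sum_nonneg fun m _ => div_nonneg (ht0 m) (hπ m).le
    have hkey : ∀ n, (((s : ℂ) • bcT n) - W n).PosSemidef := by
      intro n
      have ha : t n ≤ s * π n := by
        have := hsn n
        rw [div_le_iff₀ (hπ n)] at this
        linarith
      have heq : ((s : ℂ) • bcT n) - W n
          = (((s * π n - t n : ℝ) : ℂ) • Qc) + (((t n : ℝ) : ℂ) • Qc - W n) := by
        rw [hbc_eq n, smul_smul]
        push_cast
        rw [sub_smul]
        abel
      rw [heq]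
      exact Matrix.PosSemidef.add (psd_smul (P3e.psd_map hQ.posSemidef)
        (by rw [Complex.le_def]; simp; linarith)) (htps n)
    intro n p q
    -- E k := s • iterate of bcT
    have hEsub : ∀ k, ((((s:ℂ) • (LC ^ k) bcT n)) - ((LC ^ k) W n)).PosSemidef := by
      intro k
      have h1 : (((s:ℂ) • (LC ^ k) bcT n)) - ((LC ^ k) W n)
          = ((LC ^ k) ((fun m => (s:ℂ) • bcT m) - W)) n := by
        have h2 : ((fun m => (s:ℂ) • bcT m) - W) = ((s:ℂ) • bcT - W) := by
          funext m; simp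
        rw [h2, map_sub, _root_.map_smul]
        simp
      rw [h1]
      exact hLCpow k _ (fun m => by simpa using hkey m) n
    have hHpsd : ∀ k, (((LC ^ k) W) n).PosSemidef := fun k => hLCpow k W hW n
    have hdiagW : ∀ r : Fin nx, Tendsto (fun k => (((LC ^ k) W n) r r).re) atTop (𝓝 0) := by
      intro r
      have hup : ∀ k, (((LC ^ k) W n) r r).re ≤ s * (((LC ^ k) bcT n) r r).re := by
        intro k
        have h1 := sub_psd_diag_le (hEsub k) r
        have h2 : (((s:ℂ) • (LC ^ k) bcT n) r r).re = s * (((LC ^ k) bcT n) r r).re := by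
          simp [Matrix.smul_apply, Complex.re_ofReal_mul, smul_eq_mul]
        linarith [h1, h2.symm.le]
      have hlow : ∀ k, 0 ≤ (((LC ^ k) W n) r r).re := fun k =>
        psd_diag_re_nonneg (hHpsd k) r
      have hconst : Tendsto (fun k => s * (((LC ^ k) bcT n) r r).re) atTop (𝓝 0) := by
        have := (hdiag n r).const_mul s
        simpa using this
      exact squeeze_zero hlow hup hconst
    -- off-diagonal via the PSD entry bound
    have habs : ∀ k, ‖((LC ^ k) W n) p q‖
        ≤ (((LC ^ k) W n) p p).re + (((LC ^ k) W n) q q).re := fun k =>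
      psd_abs_entry (hHpsd k) p q
    have habs0 : Tendsto (fun k => ‖((LC ^ k) W n) p q‖) atTop (𝓝 0) := by
      have hsum := (hdiagW p).add (hdiagW q)
      rw [add_zero] at hsum
      exact squeeze_zero (fun k => norm_nonneg _) habs hsum
    rw [tendsto_zero_iff_norm_tendsto_zero]
    simpa using habs0
  -- decay for Hermitian tuples
  have hherm_decay : ∀ (W : Fin N → Matrix (Fin nx) (Fin nx) ℂ), (∀ n, (W n).IsHermitian) →
      ∀ (n : Fin N) (p q : Fin nx),
      Tendsto (fun k => ((LC ^ k) W n) p q) atTop (𝓝 0) := by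
    intro W hW n p q
    set tW : Fin N → ℝ := fun m => ∑ i, ∑ j, ‖W m i j‖ with htW
    set P : Fin N → Matrix (Fin nx) (Fin nx) ℂ :=
      fun m => ((tW m : ℝ) : ℂ) • 1 + W m with hP
    set T : Fin N → Matrix (Fin nx) (Fin nx) ℂ := fun m => ((tW m : ℝ) : ℂ) • 1 with hT
    have hPpsd : ∀ m, (P m).PosSemidef := fun m => herm_add_smul_one_psd (hW m)
    have hTpsd : ∀ m, (T m).PosSemidef := by
      intro m
      refine psd_smul Matrix.PosSemidef.one ?_
      rw [Complex.le_def]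
      constructor
      · simp only [Complex.zero_re, Complex.ofReal_re]
        exact Finset.sum_nonneg fun i _ => Finset.sum_nonneg fun j _ => norm_nonneg _
      · simp
    have hWPT : W = P - T := by
      funext m
      simp [hP, hT]
    have h1 := hpsd_decay P hPpsd n p q
    have h2 := hpsd_decay T hTpsd n p q
    rw [hWPT]
    have h3 : ∀ k, ((LC ^ k) (P - T) n) p q = ((LC ^ k) P n) p q - ((LC ^ k) T n) p q := by
      intro k
      rw [map_sub]
      simp
    simp only [h3]
    simpa using h1.sub h2
  -- decay for arbitrary tuples
  intro V n i j
  set H1 : Fin N → Matrix (Fin nx) (Fin nx) ℂ := fun m => (2⁻¹ : ℂ) • (V m + (V m)ᴴ) with hH1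
  set H2 : Fin N → Matrix (Fin nx) (Fin nx) ℂ :=
    fun m => (-(Complex.I) / 2) • (V m - (V m)ᴴ) with hH2
  have hH1herm : ∀ m, (H1 m).IsHermitian := by
    intro m
    unfold Matrix.IsHermitian
    rw [hH1]
    rw [Matrix.conjTranspose_smul, Matrix.conjTranspose_add, Matrix.conjTranspose_conjTranspose]
    rw [show star (2⁻¹ : ℂ) = (2⁻¹ : ℂ) by simp]
    rw [add_comm]
  have hH2herm : ∀ m, (H2 m).IsHermitian := by
    intro m
    unfold Matrix.IsHermitian
    ext a b
    have hsI : star (-(Complex.I) / 2) = Complex.I / 2 := by simp [Complex.conj_I]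
    simp only [hH2, Matrix.conjTranspose_apply, Matrix.smul_apply, Matrix.sub_apply,
      smul_eq_mul, star_mul', star_sub, star_star, hsI]
    ring
  have hdecomp : V = fun m => H1 m + Complex.I • H2 m := by
    funext m
    ext a b
    simp only [hH1, hH2, Matrix.add_apply, Matrix.smul_apply, Matrix.sub_apply,
      Matrix.conjTranspose_apply, smul_eq_mul]
    linear_combination (V m a b - star (V m b a)) / 2 * Complex.I_mul_I
  have h1 := hherm_decay H1 hH1herm n i j
  have h2 := hherm_decay H2 hH2herm n i j
  have h3 : ∀ k, ((LC ^ k) V n) i j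
      = ((LC ^ k) H1 n) i j + Complex.I * ((LC ^ k) H2 n) i j := by
    intro k
    have h4 : V = H1 + Complex.I • H2 := by
      rw [hdecomp]
      funext m
      simp
    rw [h4, map_add, _root_.map_smul]
    simp
  simp only [h3]
  have := h1.add ((h2.const_mul Complex.I))
  simpa using this

end P3main

namespace P3main
open P3b P3c P3d P3e P3f P3g Filter Topology Complex
open scoped ComplexOrder

variable {nx N : ℕ}
  (A Q : Matrix (Fin nx) (Fin nx) ℝ)
  (Pe : Matrix (Fin N) (Fin N) ℝ) (γ : Fin N → ℝ) (lam : ℝ) (π : Fin N → ℝ)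

lemma fix_iff (S : Fin N → Matrix (Fin nx) (Fin nx) ℝ) :
    (∀ n, S n = Sop A Q Pe γ lam π S n)
      ↔ S = Lop ℝ (c Pe γ lam) A S + (fun n => π n • Q) := by
  constructor
  · intro h
    funext n
    rw [h n]
    rfl
  · intro h n
    nth_rewrite 1 [h]
    rfl

lemma forward (hnx : 0 < nx) (hN : 0 < N) (hQ : Q.PosDef)
    (hPnonneg : ∀ m n, 0 ≤ Pe m n) (hγ : ∀ m, γ m ∈ Set.Icc (0:ℝ) 1)
    (hlam : lam ∈ Set.Icc (0:ℝ) 1) (hπ : ∀ n, 0 < π n)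
    (S : Fin N → Matrix (Fin nx) (Fin nx) ℝ) (hSpsd : ∀ n, (S n).PosSemidef)
    (hSfix : S = Lop ℝ (c Pe γ lam) A S + (fun n => π n • Q)) :
    specRad (calAe A Pe γ lam) < 1 := by
  haveI : Nonempty (Fin nx) := Fin.pos_iff_nonempty.mp hnx
  haveI : Nonempty (Fin N) := Fin.pos_iff_nonempty.mp hN
  haveI : Nonempty (Fin N × Fin nx × Fin nx) := instNonemptyProd
  refine specRad_lt_one_of_eigen _ (fun μ hμ => ?_)
  rw [mem_spectrum_iff_eigen] at hμ
  obtain ⟨v, hv, heig⟩ := hμ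
  refine eigen_abs_lt_one hv heig (fun d => ?_)
  set V : Fin N → Matrix (Fin nx) (Fin nx) ℂ := (vecE ℂ).symm v with hV
  have hveq : vecE ℂ V = v := (vecE ℂ).apply_symm_apply v
  have hpow : ∀ k : ℕ, ((calAe A Pe γ lam).map (Complex.ofReal ·) ^ k) *ᵥ v
      = vecE ℂ ((Lop ℂ (cC Pe γ lam) (Ac A) ^ k) V) := by
    intro k
    rw [← hveq]
    exact pow_mulVec_vecE (cC Pe γ lam) (Ac A) _ (Mc_entries A Pe γ lam) V k
  have hdecay := decay_core A Q Pe γ lam π hnx hQ hPnonneg hγ hlam hπ S hSpsd hSfix V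
      d.1 d.2.1 d.2.2
  simp only [hpow]
  exact hdecay

lemma backward (hnx : 0 < nx) (hN : 0 < N) (hQ : Q.PosDef)
    (hPnonneg : ∀ m n, 0 ≤ Pe m n) (hγ : ∀ m, γ m ∈ Set.Icc (0:ℝ) 1)
    (hlam : lam ∈ Set.Icc (0:ℝ) 1) (hπ : ∀ n, 0 < π n)
    (h : specRad (calAe A Pe γ lam) < 1) :
    ∃! S : Fin N → Matrix (Fin nx) (Fin nx) ℝ,
      (∀ n, (S n).PosSemidef) ∧ S = Lop ℝ (c Pe γ lam) A S + (fun n => π n • Q) := by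
  haveI : Nonempty (Fin nx) := Fin.pos_iff_nonempty.mp hnx
  haveI : Nonempty (Fin N) := Fin.pos_iff_nonempty.mp hN
  haveI : Nonempty (Fin N × Fin nx × Fin nx) := instNonemptyProd
  set Mm := calAe A Pe γ lam with hMm
  set b : Fin N → Matrix (Fin nx) (Fin nx) ℝ := fun n => π n • Q with hb
  set vb : (Fin N × (Fin nx × Fin nx)) → ℝ := vecE ℝ b with hvb
  have hU : IsUnit (1 - Mm) := one_sub_det_ne_zero Mm h
  have hdet : IsUnit (1 - Mm).det := (Matrix.isUnit_iff_isUnit_det _).mp hU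
  -- the unique solution of the vectorized linear equation
  set x : (Fin N × (Fin nx × Fin nx)) → ℝ := (1 - Mm)⁻¹ *ᵥ vb with hx
  have hxeq : (1 - Mm) *ᵥ x = vb := by
    rw [hx, Matrix.mulVec_mulVec, Matrix.mul_nonsing_inv _ hdet, Matrix.one_mulVec]
  have hxfix : x = Mm *ᵥ x + vb := by
    rw [Matrix.sub_mulVec, Matrix.one_mulVec] at hxeq
    rw [← hxeq]
    abel
  set S₀ : Fin N → Matrix (Fin nx) (Fin nx) ℝ := (vecE ℝ).symm x with hS₀
  have hvecS₀ : vecE ℝ S₀ = x := (vecE ℝ).apply_symm_apply x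
  have hfix₀ : S₀ = Lop ℝ (c Pe γ lam) A S₀ + b := by
    apply (vecE ℝ).injective
    rw [map_add, hvecS₀, ← mulVec_vecE (c Pe γ lam) A Mm (M_entries A Pe γ lam) S₀, hvecS₀,
      ← hvb]
    exact hxfix
  -- uniqueness of any fixed point
  have huniq : ∀ S S' : Fin N → Matrix (Fin nx) (Fin nx) ℝ,
      S = Lop ℝ (c Pe γ lam) A S + b → S' = Lop ℝ (c Pe γ lam) A S' + b → S = S' := by
    intro S S' hS hS'
    have hvS : vecE ℝ S = Mm *ᵥ vecE ℝ S + vb := by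
      nth_rewrite 1 [hS]
      rw [map_add, ← mulVec_vecE (c Pe γ lam) A Mm (M_entries A Pe γ lam) S, hvb]
    have hvS' : vecE ℝ S' = Mm *ᵥ vecE ℝ S' + vb := by
      nth_rewrite 1 [hS']
      rw [map_add, ← mulVec_vecE (c Pe γ lam) A Mm (M_entries A Pe γ lam) S', hvb]
    have hdiff : (1 - Mm) *ᵥ (vecE ℝ S - vecE ℝ S') = 0 := by
      rw [Matrix.sub_mulVec, Matrix.one_mulVec, Matrix.mulVec_sub]
      nth_rewrite 1 [hvS]
      nth_rewrite 1 [hvS']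
      abel
    have hzero : vecE ℝ S - vecE ℝ S' = 0 := by
      have h1 : (1 - Mm)⁻¹ *ᵥ ((1 - Mm) *ᵥ (vecE ℝ S - vecE ℝ S'))
          = vecE ℝ S - vecE ℝ S' := by
        rw [Matrix.mulVec_mulVec, Matrix.nonsing_inv_mul _ hdet, Matrix.one_mulVec]
      rw [hdiff, Matrix.mulVec_zero] at h1
      exact h1.symm
    apply (vecE ℝ).injective
    rw [← sub_eq_zero]
    exact_mod_cast hzero
  -- PSD via limits of partial sums
  have hLRpow_psd : ∀ (k : ℕ) (W : Fin N → Matrix (Fin nx) (Fin nx) ℝ),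
      (∀ n, (W n).PosSemidef) → ∀ n, ((Lop ℝ (c Pe γ lam) A ^ k) W n).PosSemidef := by
    intro k
    induction k with
    | zero => intro W hW n; simpa using hW n
    | succ k ih =>
        intro W hW n
        rw [pow_succ, Module.End.mul_apply]
        exact ih _ (fun m => Lop_psd (c Pe γ lam) A (c_nonneg Pe γ lam hPnonneg hγ hlam)
          (A_transpose A) W hW m) n
  have hbpsd : ∀ n, (b n).PosSemidef := fun n => psd_smul hQ.posSemidef (hπ n).le
  set Tk : ℕ → (Fin N → Matrix (Fin nx) (Fin nx) ℝ) :=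
    fun k => ∑ j ∈ Finset.range k, (Lop ℝ (c Pe γ lam) A ^ j) b with hTk
  have hTkpsd : ∀ k n, ((Tk k) n).PosSemidef := by
    intro k n
    have h1 : (Tk k) n = ∑ j ∈ Finset.range k, ((Lop ℝ (c Pe γ lam) A ^ j) b) n := by
      simp [hTk, Finset.sum_apply]
    rw [h1]
    exact psd_sum _ _ (fun j _ => hLRpow_psd j b hbpsd n)
  -- iterate identity and entry convergence
  have hiter := unfold_fixed (Lop ℝ (c Pe γ lam) A) S₀ b hfix₀
  have hpow_entry : ∀ (n : Fin N) (i j : Fin nx),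
      Tendsto (fun k => ((Lop ℝ (c Pe γ lam) A ^ k) S₀ n) i j) atTop (𝓝 0) := by
    intro n i j
    have h1 : ∀ k, ((Lop ℝ (c Pe γ lam) A ^ k) S₀ n) i j = ((Mm ^ k) *ᵥ x) (n, (i, j)) := by
      intro k
      rw [← hvecS₀, pow_mulVec_vecE (c Pe γ lam) A Mm (M_entries A Pe γ lam) S₀ k]
      rfl
    simp only [h1]
    have h2 : ∀ k, ((Mm ^ k) *ᵥ x) (n, (i, j))
        = ∑ e, (Mm ^ k) (n, (i, j)) e * x e := fun k => rfl
    simp only [h2]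
    have h3 : Tendsto (fun k => ∑ e, (Mm ^ k) (n, (i, j)) e * x e) atTop
        (𝓝 (∑ e : Fin N × (Fin nx × Fin nx), 0 * x e)) := by
      refine tendsto_finset_sum _ fun e _ => ?_
      exact (pow_entry_tendsto Mm h (n, (i, j)) e).mul_const (x e)
    simpa using h3
  have hTk_entry : ∀ (n : Fin N) (i j : Fin nx),
      Tendsto (fun k => (Tk k n) i j) atTop (𝓝 (S₀ n i j)) := by
    intro n i j
    have h1 : ∀ k, (Tk k n) i j = S₀ n i j - ((Lop ℝ (c Pe γ lam) A ^ k) S₀ n) i j := by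
      intro k
      have := hiter k
      have h2 : S₀ n i j = ((Lop ℝ (c Pe γ lam) A ^ k) S₀ n) i j + (Tk k n) i j := by
        nth_rewrite 1 [this]
        simp [hTk, Finset.sum_apply, Matrix.sum_apply, Matrix.add_apply]
      linarith
    simp only [h1]
    have := (hpow_entry n i j).const_sub (S₀ n i j)
    simpa using this
  have hS₀psd : ∀ n, (S₀ n).PosSemidef := by
    intro n
    refine Matrix.PosSemidef.of_dotProduct_mulVec_nonneg ?_ ?_
    · ext i j
      rw [Matrix.conjTranspose_apply, star_trivial]
      have h1 : Tendsto (fun k => (Tk k n) j i) atTop (𝓝 (S₀ n j i)) := hTk_entry n j i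
      have h2 : Tendsto (fun k => (Tk k n) j i) atTop (𝓝 (S₀ n i j)) := by
        have h3 : ∀ k, (Tk k n) j i = (Tk k n) i j := by
          intro k
          have h4 := (hTkpsd k n).1
          have h5 := congrFun (congrFun h4 j) i
          rw [Matrix.conjTranspose_apply, star_trivial] at h5
          exact h5.symm
        simp only [h3]
        exact hTk_entry n i j
      exact tendsto_nhds_unique h1 h2
    · intro y
      rw [star_trivial]
      have hq : ∀ (X : Matrix (Fin nx) (Fin nx) ℝ),
          dotProduct y (X *ᵥ y) = ∑ i, ∑ j, y i * (X i j * y j) := by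
        intro X
        simp [dotProduct, Matrix.mulVec, Finset.mul_sum]
      rw [hq]
      have hlim : Tendsto (fun k => ∑ i, ∑ j, y i * ((Tk k n) i j * y j)) atTop
          (𝓝 (∑ i, ∑ j, y i * (S₀ n i j * y j))) := by
        refine tendsto_finset_sum _ fun i _ => tendsto_finset_sum _ fun j _ => ?_
        exact (((hTk_entry n i j).mul_const (y j)).const_mul (y i))
      refine ge_of_tendsto hlim (Eventually.of_forall fun k => ?_)
      have := (hTkpsd k n).dotProduct_mulVec_nonneg y
      rw [star_trivial, hq] at this
      exact this
  exact ⟨S₀, ⟨hS₀psd, hfix₀⟩, fun S' hS' => huniq S' S₀ hS'.2 hfix₀⟩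

end P3main


theorem stmt_10 {nx N : ℕ} (hnx : 0 < nx) (hN : 0 < N)
    (A : Matrix (Fin nx) (Fin nx) ℝ) (Q : Matrix (Fin nx) (Fin nx) ℝ) (hQ : Q.PosDef)
    (Pe : Matrix (Fin N) (Fin N) ℝ)
    (hPnonneg : ∀ m n, 0 ≤ Pe m n) (hProw : ∀ m, ∑ n, Pe m n = 1)
    (γ : Fin N → ℝ) (hγ : ∀ m, γ m ∈ Set.Icc (0 : ℝ) 1)
    (lam : ℝ) (hlam : lam ∈ Set.Icc (0 : ℝ) 1)
    (π : Fin N → ℝ) (hπ : ∀ n, 0 < π n) :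
    ((∃ S : Fin N → Matrix (Fin nx) (Fin nx) ℝ,
        (∀ n, (S n).PosSemidef) ∧ ∀ n, S n = Sop A Q Pe γ lam π S n) ↔
      specRad (calAe A Pe γ lam) < 1) ∧
    (specRad (calAe A Pe γ lam) < 1 →
      ∃! S : Fin N → Matrix (Fin nx) (Fin nx) ℝ,
        (∀ n, (S n).PosSemidef) ∧ ∀ n, S n = Sop A Q Pe γ lam π S n) := by
  have hbig : specRad (calAe A Pe γ lam) < 1 →
      ∃! S : Fin N → Matrix (Fin nx) (Fin nx) ℝ,
        (∀ n, (S n).PosSemidef) ∧ ∀ n, S n = Sop A Q Pe γ lam π S n := by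
    intro h
    obtain ⟨S, ⟨hps, hfix⟩, huniq⟩ :=
      P3main.backward A Q Pe γ lam π hnx hN hQ hPnonneg hγ hlam hπ h
    refine ⟨S, ⟨hps, (P3main.fix_iff A Q Pe γ lam π S).mpr hfix⟩, ?_⟩
    intro S' hS'
    exact huniq S' ⟨hS'.1, (P3main.fix_iff A Q Pe γ lam π S').mp hS'.2⟩
  refine ⟨⟨?_, ?_⟩, hbig⟩
  · rintro ⟨S, hps, hfix⟩
    exact P3main.forward A Q Pe γ lam π hnx hN hQ hPnonneg hγ hlam hπ S hps
      ((P3main.fix_iff A Q Pe γ lam π S).mp hfix)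
  · intro h
    obtain ⟨S, hS, -⟩ := hbig h
    exact ⟨S, hS.1, hS.2⟩
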